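/- Let p and q be strictly positive, twice continuously differentiable probability densities on [0,1]^d. Then ∫_{[0,1]^d} p(x) h(x,q) dx − ∫_{[0,1]^d} p(x) h(x,p) dx = (1/2) ∫_{[0,1]^d} p(x) Σ_{i=1}^d x_i²(1−x_i)² (∂_i log p(x) − ∂_i log q(x))² dx. In particular ∫ p(x) h(x,q) dx ≥ ∫ p(x) h(x,p) dx, with equality if and only if q = p on [0,1]^d; that is, the bounded-domain Hyvärinen score h is a proper scoring rule for this class of densities. (Proposition 1.) -/

import Mathlib

open MeasureTheory

/-- Partial derivative in coordinate `i`. -/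
noncomputable def pd {d : ℕ} (i : Fin d) (f : (Fin d → ℝ) → ℝ) (x : Fin d → ℝ) : ℝ :=
  fderiv ℝ f x (Pi.single i 1)

/-- Second partial derivative in coordinate `i`. -/
noncomputable def pd2 {d : ℕ} (i : Fin d) (f : (Fin d → ℝ) → ℝ) : (Fin d → ℝ) → ℝ :=
  pd i (pd i f)

/-- Bounded-domain Hyvärinen score on `[0,1]^d`:
`h(x,q) = ∑ i [ (1/2) x_i²(1−x_i)² (∂_i log q)² − 2(2x_i−1)x_i(1−x_i) ∂_i log q
  + x_i²(1−x_i)² ∂_i² log q ]`. -/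
noncomputable def hScore {d : ℕ} (q : (Fin d → ℝ) → ℝ) (x : Fin d → ℝ) : ℝ :=
  ∑ i : Fin d,
    ((1/2) * (x i)^2 * (1 - x i)^2 * (pd i (fun y => Real.log (q y)) x)^2
      - 2 * (2 * x i - 1) * (x i) * (1 - x i) * pd i (fun y => Real.log (q y)) x
      + (x i)^2 * (1 - x i)^2 * pd2 i (fun y => Real.log (q y)) x)

open Set



variable {d : ℕ}

/-- open unit box -/
def ubox (d : ℕ) : Set (Fin d → ℝ) := Set.pi Set.univ fun _ => Set.Ioo (0:ℝ) 1

lemma mem_box {x : Fin d → ℝ} : x ∈ Set.Icc (0 : Fin d → ℝ) 1 ↔ ∀ i, 0 ≤ x i ∧ x i ≤ 1 := by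
  simp [Set.mem_Icc, Pi.le_def, forall_and]

lemma mem_ubox {x : Fin d → ℝ} : x ∈ ubox d ↔ ∀ i, 0 < x i ∧ x i < 1 := by
  simp [ubox, Set.mem_pi, Set.mem_Ioo]

lemma ubox_subset : ubox d ⊆ Set.Icc (0 : Fin d → ℝ) 1 := by
  intro x hx
  rw [mem_ubox] at hx
  exact mem_box.2 fun i => ⟨(hx i).1.le, (hx i).2.le⟩

lemma isOpen_ubox : IsOpen (ubox d) :=
  isOpen_set_pi Set.finite_univ fun _ _ => isOpen_Ioo

lemma box_mem_nhds {x : Fin d → ℝ} (hx : x ∈ ubox d) : Set.Icc (0 : Fin d → ℝ) 1 ∈ nhds x :=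
  Filter.mem_of_superset (isOpen_ubox.mem_nhds hx) ubox_subset

lemma half_mem_ubox : (fun _ => (1:ℝ)/2) ∈ ubox d := mem_ubox.2 fun _ => by norm_num

lemma uniqueDiffOn_box : UniqueDiffOn ℝ (Set.Icc (0 : Fin d → ℝ) 1) :=
  uniqueDiffOn_convex (convex_Icc 0 1) ⟨_, interior_mono ubox_subset (isOpen_ubox.interior_eq ▸ half_mem_ubox)⟩

lemma volume_box : volume (Set.Icc (0 : Fin d → ℝ) 1) = 1 := by
  rw [Real.volume_Icc_pi]
  simp

lemma volume_ubox : volume (ubox d) = 1 := by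
  rw [ubox, volume_pi_pi]
  simp [Real.volume_Ioo]

lemma box_ae_ubox : (Set.Icc (0 : Fin d → ℝ) 1 : Set (Fin d → ℝ)) =ᵐ[volume] ubox d := by
  rw [Filter.eventuallyEq_set]
  have h1 : volume (Set.Icc (0 : Fin d → ℝ) 1 \ ubox d) = 0 := by
    have := measure_diff (ubox_subset (d := d)) (isOpen_ubox.measurableSet.nullMeasurableSet)
      (by rw [volume_ubox]; exact ENNReal.one_ne_top)
    rw [this, volume_box, volume_ubox, tsub_self]
  have h2 : volume (ubox d \ Set.Icc (0 : Fin d → ℝ) 1) = 0 := by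
    rw [Set.diff_eq_empty.2 ubox_subset, measure_empty]
  have := measure_union_null h1 h2
  filter_upwards [measure_eq_zero_iff_ae_notMem.1 this] with x hx
  simp only [Set.mem_union, Set.mem_diff] at hx
  push_neg at hx
  constructor
  · intro h; exact hx.1 h
  · intro h; exact ubox_subset h

variable {d : ℕ}

/-- first within-derivative -/
noncomputable def W1 (i : Fin d) (f : (Fin d → ℝ) → ℝ) (y : Fin d → ℝ) : ℝ :=
  fderivWithin ℝ f (Set.Icc 0 1) y (Pi.single i 1)

/-- second within-derivative -/
noncomputable def W2 (i : Fin d) (f : (Fin d → ℝ) → ℝ) (y : Fin d → ℝ) : ℝ :=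
  fderivWithin ℝ (W1 i f) (Set.Icc 0 1) y (Pi.single i 1)

section
variable {f : (Fin d → ℝ) → ℝ} {i : Fin d}

lemma contOn_W1 (hf : ContDiffOn ℝ 2 f (Set.Icc 0 1)) : ContinuousOn (W1 i f) (Set.Icc (0 : Fin d → ℝ) 1) := by
  have h := (hf.fderivWithin uniqueDiffOn_box (by norm_num)
    : ContDiffOn ℝ 1 (fderivWithin ℝ f (Set.Icc 0 1)) (Set.Icc 0 1))
  exact h.continuousOn.clm_apply continuousOn_const

lemma contDiffOn_W1 (hf : ContDiffOn ℝ 2 f (Set.Icc 0 1)) : ContDiffOn ℝ 1 (W1 i f) (Set.Icc (0 : Fin d → ℝ) 1) := by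
  have h := (hf.fderivWithin uniqueDiffOn_box (by norm_num)
    : ContDiffOn ℝ 1 (fderivWithin ℝ f (Set.Icc 0 1)) (Set.Icc 0 1))
  exact h.clm_apply contDiffOn_const

lemma contOn_W2 (hf : ContDiffOn ℝ 2 f (Set.Icc 0 1)) : ContinuousOn (W2 i f) (Set.Icc (0 : Fin d → ℝ) 1) := by
  have h := ((contDiffOn_W1 hf).fderivWithin uniqueDiffOn_box (le_refl 1)
    : ContDiffOn ℝ 0 (fderivWithin ℝ (W1 i f) (Set.Icc 0 1)) (Set.Icc 0 1))
  exact h.continuousOn.clm_apply continuousOn_const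

lemma W1_eq_pd {x : Fin d → ℝ} (hx : x ∈ ubox d) : W1 i f x = pd i f x := by
  rw [W1, pd, fderivWithin_of_mem_nhds (box_mem_nhds hx)]

lemma pd_eventually_eq {x : Fin d → ℝ} (hx : x ∈ ubox d) :
    W1 i f =ᶠ[nhds x] pd i f := by
  filter_upwards [isOpen_ubox.mem_nhds hx] with y hy
  exact W1_eq_pd hy

lemma W2_eq_pd2 {x : Fin d → ℝ} (hx : x ∈ ubox d) : W2 i f x = pd2 i f x := by
  rw [W2, pd2, pd, fderivWithin_of_mem_nhds (box_mem_nhds hx),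
    (pd_eventually_eq (f := f) (i := i) hx).fderiv_eq]

/-- differentiability facts at interior points -/
lemma contDiffAt_ubox (hf : ContDiffOn ℝ 2 f (Set.Icc 0 1)) {x : Fin d → ℝ} (hx : x ∈ ubox d) : ContDiffAt ℝ 2 f x :=
  (hf x (ubox_subset hx)).contDiffAt (box_mem_nhds hx)

lemma diffAt_ubox (hf : ContDiffOn ℝ 2 f (Set.Icc 0 1)) {x : Fin d → ℝ} (hx : x ∈ ubox d) : DifferentiableAt ℝ f x :=
  (contDiffAt_ubox hf hx).differentiableAt (by norm_num)

lemma diffAt_pd (hf : ContDiffOn ℝ 2 f (Set.Icc 0 1)) {x : Fin d → ℝ} (hx : x ∈ ubox d) :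
    DifferentiableAt ℝ (pd i f) x := by
  have h : ContDiffAt ℝ 1 (fderiv ℝ f) x :=
    (contDiffAt_ubox hf hx).fderiv_right (le_refl 2)
  exact (h.differentiableAt one_ne_zero).clm_apply (differentiableAt_const _)

end

variable {d : ℕ} {i : Fin d} {x : Fin d → ℝ}

lemma pd_congr {g h : (Fin d → ℝ) → ℝ} (hgh : g =ᶠ[nhds x] h) : pd i g x = pd i h x := by
  rw [pd, pd, hgh.fderiv_eq]

lemma slice_hasDerivAt {g : (Fin d → ℝ) → ℝ} (hg : DifferentiableAt ℝ g x) :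
    HasDerivAt (fun t : ℝ => g (x + t • (Pi.single i 1 : Fin d → ℝ))) (pd i g x) 0 := by
  have hline : HasDerivAt (fun t : ℝ => x + t • (Pi.single i 1 : Fin d → ℝ)) (Pi.single i 1) 0 := by
    simpa using ((hasDerivAt_id (0:ℝ)).smul_const (Pi.single i (1:ℝ))).const_add x
  have h := HasFDerivAt.comp_hasDerivAt (x := (0:ℝ))
    (show HasFDerivAt g (fderiv ℝ g x) ((fun t : ℝ => x + t • (Pi.single i 1 : Fin d → ℝ)) 0) by
      simpa using hg.hasFDerivAt) hline
  exact h

lemma pd_slice {g : (Fin d → ℝ) → ℝ} (hg : DifferentiableAt ℝ g x) :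
    pd i g x = deriv (fun t : ℝ => g (x + t • (Pi.single i 1 : Fin d → ℝ))) 0 :=
  (slice_hasDerivAt hg).deriv.symm

lemma pd_log {f : (Fin d → ℝ) → ℝ} (hf : ContDiffOn ℝ 2 f (Set.Icc 0 1))
    (hx : x ∈ ubox d) (hne : f x ≠ 0) :
    pd i (fun y => Real.log (f y)) x = (f x)⁻¹ * pd i f x := by
  rw [pd, ((diffAt_ubox hf hx).hasFDerivAt.log hne).fderiv]
  simp [pd]

lemma pd2_log {f : (Fin d → ℝ) → ℝ} (hf : ContDiffOn ℝ 2 f (Set.Icc 0 1))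
    (hpos : ∀ y ∈ Set.Icc (0 : Fin d → ℝ) 1, 0 < f y) (hx : x ∈ ubox d) :
    pd2 i (fun y => Real.log (f y)) x
      = pd2 i f x / f x - (pd i f x / f x)^2 := by
  have hne : ∀ y ∈ ubox d, f y ≠ 0 := fun y hy => (hpos y (ubox_subset hy)).ne'
  have hev : (pd i fun y => Real.log (f y)) =ᶠ[nhds x] fun y => (f y)⁻¹ * pd i f y := by
    filter_upwards [isOpen_ubox.mem_nhds hx] with y hy
    exact pd_log hf hy (hne y hy)
  have hdiff : DifferentiableAt ℝ (fun y => (f y)⁻¹ * pd i f y) x :=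
    ((diffAt_ubox hf hx).inv (hne x hx)).mul (diffAt_pd hf hx)
  have hslice : HasDerivAt (fun t : ℝ => (f (x + t • (Pi.single i 1 : Fin d → ℝ)))⁻¹ * pd i f (x + t • (Pi.single i 1 : Fin d → ℝ)))
      (-(pd i f x) / f x ^ 2 * pd i f x + (f x)⁻¹ * pd2 i f x) 0 := by
    have h1 := (slice_hasDerivAt (i := i) (diffAt_ubox hf hx)).inv (by simpa using hne x hx)
    have h2 := slice_hasDerivAt (i := i) (g := pd i f) (diffAt_pd hf hx)
    have h3 := h1.mul h2
    simp only [Pi.inv_apply, zero_smul, add_zero] at h3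
    exact h3
  rw [pd2, pd_congr hev, pd_slice hdiff, hslice.deriv]
  have h0 : f x ≠ 0 := hne x hx
  rw [pd2]
  field_simp
  ring

section PsiSection

variable {d : ℕ} {p q : (Fin d → ℝ) → ℝ} {i : Fin d} {x : Fin d → ℝ}

noncomputable def Psi (p q : (Fin d → ℝ) → ℝ) (i : Fin d) (y : Fin d → ℝ) : ℝ :=
  (y i)^2 * (1 - y i)^2 * (p y * (pd i q y / q y) - pd i p y)

noncomputable def PsiC (p q : (Fin d → ℝ) → ℝ) (i : Fin d) (y : Fin d → ℝ) : ℝ :=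
  (y i)^2 * (1 - y i)^2 * (p y * (W1 i q y / q y) - W1 i p y)

noncomputable def psiD (p q : (Fin d → ℝ) → ℝ) (i : Fin d) (y : Fin d → ℝ) : ℝ :=
  (2*(y i)*(1 - y i)^2 - 2*(y i)^2*(1 - y i)) * (p y * (pd i q y / q y) - pd i p y)
  + (y i)^2*(1 - y i)^2 * (pd i p y * (pd i q y / q y)
      + p y * ((pd2 i q y * q y - pd i q y * pd i q y) / (q y)^2) - pd2 i p y)

noncomputable def psiDC (p q : (Fin d → ℝ) → ℝ) (i : Fin d) (y : Fin d → ℝ) : ℝ :=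
  (2*(y i)*(1 - y i)^2 - 2*(y i)^2*(1 - y i)) * (p y * (W1 i q y / q y) - W1 i p y)
  + (y i)^2*(1 - y i)^2 * (W1 i p y * (W1 i q y / q y)
      + p y * ((W2 i q y * q y - W1 i q y * W1 i q y) / (q y)^2) - W2 i p y)

lemma diffAt_coord : DifferentiableAt ℝ (fun y : Fin d → ℝ => y i) x :=
  (ContinuousLinearMap.proj (R := ℝ) (φ := fun _ : Fin d => ℝ) i).differentiableAt

lemma diffAt_Psi (hp : ContDiffOn ℝ 2 p (Set.Icc 0 1)) (hq : ContDiffOn ℝ 2 q (Set.Icc 0 1))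
    (hq0 : q x ≠ 0) (hx : x ∈ ubox d) : DifferentiableAt ℝ (Psi p q i) x :=
  by
  have h1 : DifferentiableAt ℝ (fun y : Fin d → ℝ => (y i)^2 * (1 - y i)^2) x :=
    (diffAt_coord.pow 2).mul (((differentiableAt_const (1:ℝ)).sub diffAt_coord).pow 2)
  have h2 : DifferentiableAt ℝ (fun y => pd i q y / q y) x := by
    simp only [div_eq_mul_inv]
    exact (diffAt_pd hq hx).mul ((diffAt_ubox hq hx).inv hq0)
  have h3 : DifferentiableAt ℝ (fun y => p y * (pd i q y / q y) - pd i p y) x :=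
    ((diffAt_ubox hp hx).mul h2).sub (diffAt_pd hp hx)
  exact h1.mul h3

lemma pd_Psi_eq (hp : ContDiffOn ℝ 2 p (Set.Icc 0 1)) (hq : ContDiffOn ℝ 2 q (Set.Icc 0 1))
    (hq0 : q x ≠ 0) (hx : x ∈ ubox d) :
    pd i (Psi p q i) x = psiD p q i x := by
  have h0 : HasDerivAt (fun t : ℝ => x i + t) 1 0 := by
    simpa using (hasDerivAt_id (0:ℝ)).const_add (x i)
  have ha := h0.pow 2
  have hb := (h0.const_sub 1).pow 2
  have hP := slice_hasDerivAt (i := i) (diffAt_ubox hp hx)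
  have hQ := slice_hasDerivAt (i := i) (diffAt_ubox hq hx)
  have hAq := slice_hasDerivAt (i := i) (g := pd i q) (diffAt_pd hq hx)
  have hAp := slice_hasDerivAt (i := i) (g := pd i p) (diffAt_pd hp hx)
  have hQ0 : q (x + (0:ℝ) • (Pi.single i 1 : Fin d → ℝ)) ≠ 0 := by simpa using hq0
  have htot := (ha.mul hb).mul ((hP.mul (hAq.div hQ hQ0)).sub hAp)
  have heq : (fun t : ℝ => Psi p q i (x + t • (Pi.single i 1 : Fin d → ℝ)))
      = fun t : ℝ => (x i + t)^2 * (1 - (x i + t))^2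
          * (p (x + t • (Pi.single i 1 : Fin d → ℝ))
              * (pd i q (x + t • (Pi.single i 1 : Fin d → ℝ))
                / q (x + t • (Pi.single i 1 : Fin d → ℝ)))
            - pd i p (x + t • (Pi.single i 1 : Fin d → ℝ))) := by
    funext t
    simp [Psi]
  rw [pd_slice (diffAt_Psi hp hq hq0 hx), heq]
  erw [htot.deriv]
  simp only [zero_smul, add_zero, Pi.mul_apply, Pi.pow_apply, Pi.div_apply, Pi.sub_apply]
  rw [psiD]
  simp only [pd2]
  field_simp
  ring_nf

lemma PsiC_eq_Psi (hx : x ∈ ubox d) : PsiC p q i x = Psi p q i x := by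
  rw [PsiC, Psi, W1_eq_pd hx, W1_eq_pd hx]

lemma psiDC_eq_psiD (hx : x ∈ ubox d) : psiDC p q i x = psiD p q i x := by
  simp only [psiDC, psiD, W1_eq_pd hx, W2_eq_pd2 hx]

lemma contOn_coord : ContinuousOn (fun y : Fin d → ℝ => y i) (Set.Icc 0 1) :=
  (continuous_apply i).continuousOn

lemma contOn_PsiC (hp : ContDiffOn ℝ 2 p (Set.Icc 0 1)) (hq : ContDiffOn ℝ 2 q (Set.Icc 0 1))
    (hqpos : ∀ y ∈ Set.Icc (0 : Fin d → ℝ) 1, 0 < q y) :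
    ContinuousOn (PsiC p q i) (Set.Icc (0 : Fin d → ℝ) 1) := by
  have hqne : ∀ y ∈ Set.Icc (0 : Fin d → ℝ) 1, q y ≠ 0 := fun y hy => (hqpos y hy).ne'
  exact ((contOn_coord.pow 2).mul ((continuousOn_const.sub contOn_coord).pow 2)).mul
    (((hp.continuousOn.mul ((contOn_W1 hq).div hq.continuousOn hqne)).sub (contOn_W1 hp)))

lemma contOn_psiDC (hp : ContDiffOn ℝ 2 p (Set.Icc 0 1)) (hq : ContDiffOn ℝ 2 q (Set.Icc 0 1))
    (hqpos : ∀ y ∈ Set.Icc (0 : Fin d → ℝ) 1, 0 < q y) :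
    ContinuousOn (psiDC p q i) (Set.Icc (0 : Fin d → ℝ) 1) := by
  have hqne : ∀ y ∈ Set.Icc (0 : Fin d → ℝ) 1, q y ≠ 0 := fun y hy => (hqpos y hy).ne'
  have hq2ne : ∀ y ∈ Set.Icc (0 : Fin d → ℝ) 1, (q y)^2 ≠ 0 := fun y hy => pow_ne_zero _ (hqne y hy)
  refine ContinuousOn.add ?_ ?_
  · exact ((continuousOn_const.mul contOn_coord).mul ((continuousOn_const.sub contOn_coord).pow 2)
      |>.sub ((continuousOn_const.mul (contOn_coord.pow 2)).mul (continuousOn_const.sub contOn_coord))).mul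
      ((hp.continuousOn.mul ((contOn_W1 hq).div hq.continuousOn hqne)).sub (contOn_W1 hp))
  · exact ((contOn_coord.pow 2).mul ((continuousOn_const.sub contOn_coord).pow 2)).mul
      ((((contOn_W1 hp).mul ((contOn_W1 hq).div hq.continuousOn hqne)).add
        (hp.continuousOn.mul ((((contOn_W2 hq).mul hq.continuousOn).sub
          ((contOn_W1 hq).mul (contOn_W1 hq))).div (hq.continuousOn.pow 2) hq2ne))).sub (contOn_W2 hp))

lemma main_pointwise (hp : ContDiffOn ℝ 2 p (Set.Icc 0 1)) (hq : ContDiffOn ℝ 2 q (Set.Icc 0 1))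
    (hppos : ∀ y ∈ Set.Icc (0 : Fin d → ℝ) 1, 0 < p y)
    (hqpos : ∀ y ∈ Set.Icc (0 : Fin d → ℝ) 1, 0 < q y) (hx : x ∈ ubox d) :
    p x * hScore q x - p x * hScore p x
      - (1/2) * (p x * ∑ i : Fin d, (x i)^2 * (1 - x i)^2
          * (pd i (fun y => Real.log (p y)) x - pd i (fun y => Real.log (q y)) x)^2)
    = ∑ i : Fin d, psiD p q i x := by
  have hP : p x ≠ 0 := (hppos x (ubox_subset hx)).ne'
  have hQ : q x ≠ 0 := (hqpos x (ubox_subset hx)).ne'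
  simp only [hScore, Finset.mul_sum]
  rw [← Finset.sum_sub_distrib, ← Finset.sum_sub_distrib]
  refine Finset.sum_congr rfl fun j _ => ?_
  rw [pd_log hp hx hP, pd_log hq hx hQ, pd2_log hp hppos hx, pd2_log hq hqpos hx, psiD]
  field_simp
  ring

end PsiSection

section IBP

lemma ibp_zero {n : ℕ} (i : Fin (n+1)) (Φ : (Fin (n+1) → ℝ) → ℝ)
    (F : (Fin (n+1) → ℝ) → (Fin (n+1) → ℝ) →L[ℝ] ℝ)
    (Hc : ContinuousOn Φ (Set.Icc 0 1))
    (Hd : ∀ x ∈ ubox (n+1), HasFDerivAt Φ (F x) x)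
    (Hi : IntegrableOn (fun x => F x (Pi.single i 1)) (Set.Icc 0 1) volume)
    (H0 : ∀ x : Fin (n+1) → ℝ, x i = 0 → Φ x = 0)
    (H1 : ∀ x : Fin (n+1) → ℝ, x i = 1 → Φ x = 0) :
    ∫ x in Set.Icc (0 : Fin (n+1) → ℝ) 1, F x (Pi.single i 1) = 0 := by
  classical
  have hsum : (fun x : Fin (n+1) → ℝ =>
      ∑ j : Fin (n+1), (if j = i then F x else 0) (Pi.single j 1))
      = fun x => F x (Pi.single i 1) := by
    funext x
    rw [Finset.sum_eq_single i]
    · simp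
    · intro j _ hj; simp [hj]
    · intro h; exact absurd (Finset.mem_univ i) h
  have husub : (Set.pi Set.univ fun j : Fin (n+1) =>
      Set.Ioo ((0 : Fin (n+1) → ℝ) j) ((1 : Fin (n+1) → ℝ) j)) = ubox (n+1) := by
    simp [ubox]
  have key := integral_divergence_of_hasFDerivAt_off_countable'
    (a := (0 : Fin (n+1) → ℝ)) (b := 1) zero_le_one
    (fun j => if j = i then Φ else 0)
    (fun j x => if j = i then F x else 0) ∅ Set.countable_empty
    (fun j => by
      by_cases h : j = i
      · simpa [h] using Hc
      · simp only [h, ↓reduceIte]; exact continuousOn_const)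
    (fun x hx j => by
      rw [husub] at hx
      by_cases h : j = i
      · subst h; simpa using Hd x hx.1
      · simp only [h, ↓reduceIte]; exact hasFDerivAt_const (0:ℝ) x)
    (by rw [hsum]; exact Hi)
  rw [hsum] at key
  rw [key]
  refine Finset.sum_eq_zero fun j _ => ?_
  by_cases h : j = i
  · subst h
    have hf : ∀ y : Fin n → ℝ,
        (if j = j then Φ else 0) (Fin.insertNth j ((1 : Fin (n+1) → ℝ) j) y) = 0 := by
      intro y
      simp only [if_pos rfl]
      exact H1 _ (by simp [Fin.insertNth_apply_same])
    have hb : ∀ y : Fin n → ℝ,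
        (if j = j then Φ else 0) (Fin.insertNth j ((0 : Fin (n+1) → ℝ) j) y) = 0 := by
      intro y
      simp only [if_pos rfl]
      exact H0 _ (by simp [Fin.insertNth_apply_same])
    rw [integral_congr_ae (Filter.Eventually.of_forall hf),
      integral_congr_ae (Filter.Eventually.of_forall hb)]
    simp
  · simp [h]

end IBP

section Integrability

variable {d : ℕ} {p q : (Fin d → ℝ) → ℝ} {i : Fin d}

lemma restrict_box_eq_ubox :
    (volume : Measure (Fin d → ℝ)).restrict (Set.Icc 0 1) = volume.restrict (ubox d) :=
  Measure.restrict_congr_set box_ae_ubox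

lemma ae_ubox : ∀ᵐ x ∂((volume : Measure (Fin d → ℝ)).restrict (Set.Icc 0 1)), x ∈ ubox d := by
  rw [restrict_box_eq_ubox]
  exact ae_restrict_mem isOpen_ubox.measurableSet

lemma integrableOn_of_ubox_eq {f g : (Fin d → ℝ) → ℝ}
    (hg : ContinuousOn g (Set.Icc (0 : Fin d → ℝ) 1))
    (hfg : ∀ x ∈ ubox d, g x = f x) :
    IntegrableOn f (Set.Icc (0 : Fin d → ℝ) 1) volume := by
  have h1 : IntegrableOn g (Set.Icc (0 : Fin d → ℝ) 1) volume :=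
    hg.integrableOn_compact isCompact_Icc
  exact h1.congr_fun_ae (by filter_upwards [ae_ubox] with x hx using hfg x hx)

lemma setIntegral_congr_ubox {f g : (Fin d → ℝ) → ℝ}
    (hfg : ∀ x ∈ ubox d, f x = g x) :
    ∫ x in Set.Icc (0 : Fin d → ℝ) 1, f x = ∫ x in Set.Icc (0 : Fin d → ℝ) 1, g x :=
  integral_congr_ae (by filter_upwards [ae_ubox] with x hx using hfg x hx)

lemma integral_pd_Psi_zero (hp : ContDiffOn ℝ 2 p (Set.Icc 0 1))
    (hq : ContDiffOn ℝ 2 q (Set.Icc 0 1))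
    (hqpos : ∀ y ∈ Set.Icc (0 : Fin d → ℝ) 1, 0 < q y) (i : Fin d) :
    ∫ x in Set.Icc (0 : Fin d → ℝ) 1, pd i (Psi p q i) x = 0 := by
  obtain ⟨n, rfl⟩ : ∃ n, d = n + 1 := ⟨d - 1, by have := i.pos; omega⟩
  have hqne : ∀ y ∈ ubox (n+1), q y ≠ 0 := fun y hy => (hqpos y (ubox_subset hy)).ne'
  have Hd : ∀ x ∈ ubox (n+1), HasFDerivAt (PsiC p q i) (fderiv ℝ (Psi p q i) x) x := by
    intro x hx
    have h1 : HasFDerivAt (Psi p q i) (fderiv ℝ (Psi p q i) x) x :=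
      (diffAt_Psi hp hq (hqne x hx) hx).hasFDerivAt
    exact h1.congr_of_eventuallyEq (by
      filter_upwards [isOpen_ubox.mem_nhds hx] with y hy using PsiC_eq_Psi hy)
  have Hi : IntegrableOn (fun x => fderiv ℝ (Psi p q i) x (Pi.single i 1))
      (Set.Icc (0 : Fin (n+1) → ℝ) 1) volume := by
    refine integrableOn_of_ubox_eq (g := psiDC p q i) (contOn_psiDC hp hq hqpos) fun x hx => ?_
    rw [psiDC_eq_psiD hx, ← pd_Psi_eq hp hq (hqne x hx) hx]
    rfl
  have key := ibp_zero i (PsiC p q i) (fun x => fderiv ℝ (Psi p q i) x)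
    (contOn_PsiC hp hq hqpos) Hd Hi
    (fun x hx => by simp [PsiC, hx]) (fun x hx => by simp [PsiC, hx])
  exact key

lemma integrableOn_pd_Psi (hp : ContDiffOn ℝ 2 p (Set.Icc 0 1))
    (hq : ContDiffOn ℝ 2 q (Set.Icc 0 1))
    (hqpos : ∀ y ∈ Set.Icc (0 : Fin d → ℝ) 1, 0 < q y) (i : Fin d) :
    IntegrableOn (fun x => pd i (Psi p q i) x) (Set.Icc (0 : Fin d → ℝ) 1) volume := by
  have hqne : ∀ y ∈ ubox d, q y ≠ 0 := fun y hy => (hqpos y (ubox_subset hy)).ne'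
  refine integrableOn_of_ubox_eq (g := psiDC p q i) (contOn_psiDC hp hq hqpos) fun x hx => ?_
  rw [psiDC_eq_psiD hx, ← pd_Psi_eq hp hq (hqne x hx) hx]

end Integrability

section FinalAux

variable {d : ℕ} {p q : (Fin d → ℝ) → ℝ}

noncomputable def hScoreC (f : (Fin d → ℝ) → ℝ) (y : Fin d → ℝ) : ℝ :=
  ∑ i : Fin d,
    ((1/2) * (y i)^2 * (1 - y i)^2 * (W1 i f y / f y)^2
      - 2 * (2 * y i - 1) * (y i) * (1 - y i) * (W1 i f y / f y)
      + (y i)^2 * (1 - y i)^2 * (W2 i f y / f y - (W1 i f y / f y)^2))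

noncomputable def fisherC (p q : (Fin d → ℝ) → ℝ) (y : Fin d → ℝ) : ℝ :=
  p y * ∑ i : Fin d, (y i)^2 * (1 - y i)^2 * (W1 i p y / p y - W1 i q y / q y)^2

lemma hScoreC_eq {f : (Fin d → ℝ) → ℝ} (hf : ContDiffOn ℝ 2 f (Set.Icc 0 1))
    (hpos : ∀ y ∈ Set.Icc (0 : Fin d → ℝ) 1, 0 < f y) {x : Fin d → ℝ} (hx : x ∈ ubox d) :
    hScoreC f x = hScore f x := by
  have hne : f x ≠ 0 := (hpos x (ubox_subset hx)).ne'
  rw [hScoreC, hScore]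
  refine Finset.sum_congr rfl fun j _ => ?_
  rw [pd_log hf hx hne, pd2_log hf hpos hx, W1_eq_pd hx, W2_eq_pd2 hx]
  field_simp

lemma contOn_hScoreC {f : (Fin d → ℝ) → ℝ} (hf : ContDiffOn ℝ 2 f (Set.Icc 0 1))
    (hpos : ∀ y ∈ Set.Icc (0 : Fin d → ℝ) 1, 0 < f y) :
    ContinuousOn (hScoreC f) (Set.Icc (0 : Fin d → ℝ) 1) := by
  refine continuousOn_finset_sum _ fun j _ => ?_
  have hne : ∀ y ∈ Set.Icc (0 : Fin d → ℝ) 1, f y ≠ 0 := fun y hy => (hpos y hy).ne'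
  have hW1 := (contOn_W1 (i := j) hf).div hf.continuousOn hne
  have hW2 := (contOn_W2 (i := j) hf).div hf.continuousOn hne
  exact ((((continuousOn_const.mul (contOn_coord.pow 2)).mul
      ((continuousOn_const.sub contOn_coord).pow 2)).mul (hW1.pow 2)).sub
    ((((continuousOn_const.mul ((continuousOn_const.mul contOn_coord).sub
      continuousOn_const)).mul contOn_coord).mul
      (continuousOn_const.sub contOn_coord)).mul hW1)).add
    (((contOn_coord.pow 2).mul ((continuousOn_const.sub contOn_coord).pow 2)).mul
      (hW2.sub (hW1.pow 2)))

lemma fisherC_eq (hp : ContDiffOn ℝ 2 p (Set.Icc 0 1)) (hq : ContDiffOn ℝ 2 q (Set.Icc 0 1))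
    (hppos : ∀ y ∈ Set.Icc (0 : Fin d → ℝ) 1, 0 < p y)
    (hqpos : ∀ y ∈ Set.Icc (0 : Fin d → ℝ) 1, 0 < q y) {x : Fin d → ℝ} (hx : x ∈ ubox d) :
    fisherC p q x = p x * ∑ i : Fin d, (x i)^2 * (1 - x i)^2
      * (pd i (fun y => Real.log (p y)) x - pd i (fun y => Real.log (q y)) x)^2 := by
  have hpne : p x ≠ 0 := (hppos x (ubox_subset hx)).ne'
  have hqne : q x ≠ 0 := (hqpos x (ubox_subset hx)).ne'
  rw [fisherC]
  congr 1
  refine Finset.sum_congr rfl fun j _ => ?_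
  rw [pd_log hp hx hpne, pd_log hq hx hqne, W1_eq_pd hx, W1_eq_pd hx,
    div_eq_inv_mul, div_eq_inv_mul]

lemma contOn_fisherC (hp : ContDiffOn ℝ 2 p (Set.Icc 0 1)) (hq : ContDiffOn ℝ 2 q (Set.Icc 0 1))
    (hppos : ∀ y ∈ Set.Icc (0 : Fin d → ℝ) 1, 0 < p y)
    (hqpos : ∀ y ∈ Set.Icc (0 : Fin d → ℝ) 1, 0 < q y) :
    ContinuousOn (fisherC p q) (Set.Icc (0 : Fin d → ℝ) 1) := by
  have hpne : ∀ y ∈ Set.Icc (0 : Fin d → ℝ) 1, p y ≠ 0 := fun y hy => (hppos y hy).ne'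
  have hqne : ∀ y ∈ Set.Icc (0 : Fin d → ℝ) 1, q y ≠ 0 := fun y hy => (hqpos y hy).ne'
  refine hp.continuousOn.mul (continuousOn_finset_sum _ fun j _ => ?_)
  exact ((contOn_coord.pow 2).mul ((continuousOn_const.sub contOn_coord).pow 2)).mul
    ((((contOn_W1 hp).div hp.continuousOn hpne).sub
      ((contOn_W1 hq).div hq.continuousOn hqne)).pow 2)

end FinalAux

/-- Proposition 1 (propriety of the bounded-domain Hyvärinen score): for strictly positive,
twice continuously differentiable probability densities `p, q` on `[0,1]^d`, the expected
score difference equals half the weighted Fisher divergence, hence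
`∫ p·h(·,q) ≥ ∫ p·h(·,p)` with equality iff `q = p` on `[0,1]^d`. -/
theorem stmt0 {d : ℕ} (p q : (Fin d → ℝ) → ℝ)
    (hp : ContDiffOn ℝ 2 p (Set.Icc 0 1)) (hq : ContDiffOn ℝ 2 q (Set.Icc 0 1))
    (hppos : ∀ x ∈ Set.Icc (0 : Fin d → ℝ) 1, 0 < p x)
    (hqpos : ∀ x ∈ Set.Icc (0 : Fin d → ℝ) 1, 0 < q x)
    (hpint : ∫ x in Set.Icc (0 : Fin d → ℝ) 1, p x = 1)
    (hqint : ∫ x in Set.Icc (0 : Fin d → ℝ) 1, q x = 1) :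
    ((∫ x in Set.Icc (0 : Fin d → ℝ) 1, p x * hScore q x)
        - (∫ x in Set.Icc (0 : Fin d → ℝ) 1, p x * hScore p x)
      = (1/2) * ∫ x in Set.Icc (0 : Fin d → ℝ) 1,
          p x * ∑ i : Fin d, (x i)^2 * (1 - x i)^2
            * (pd i (fun y => Real.log (p y)) x - pd i (fun y => Real.log (q y)) x)^2)
    ∧ (∫ x in Set.Icc (0 : Fin d → ℝ) 1, p x * hScore p x)
        ≤ (∫ x in Set.Icc (0 : Fin d → ℝ) 1, p x * hScore q x)
    ∧ ((∫ x in Set.Icc (0 : Fin d → ℝ) 1, p x * hScore q x)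
          = (∫ x in Set.Icc (0 : Fin d → ℝ) 1, p x * hScore p x)
        ↔ Set.EqOn q p (Set.Icc 0 1)) := by
  have hIq : IntegrableOn (fun x => p x * hScore q x) (Set.Icc (0 : Fin d → ℝ) 1) volume :=
    integrableOn_of_ubox_eq (g := fun x => p x * hScoreC q x)
      (hp.continuousOn.mul (contOn_hScoreC hq hqpos))
      (fun x hx => by show p x * hScoreC q x = p x * hScore q x; rw [hScoreC_eq hq hqpos hx])
  have hIp : IntegrableOn (fun x => p x * hScore p x) (Set.Icc (0 : Fin d → ℝ) 1) volume :=
    integrableOn_of_ubox_eq (g := fun x => p x * hScoreC p x)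
      (hp.continuousOn.mul (contOn_hScoreC hp hppos))
      (fun x hx => by show p x * hScoreC p x = p x * hScore p x; rw [hScoreC_eq hp hppos hx])
  have hIF : IntegrableOn (fun x => p x * ∑ i : Fin d, (x i)^2 * (1 - x i)^2
      * (pd i (fun y => Real.log (p y)) x - pd i (fun y => Real.log (q y)) x)^2)
      (Set.Icc (0 : Fin d → ℝ) 1) volume :=
    integrableOn_of_ubox_eq (g := fisherC p q) (contOn_fisherC hp hq hppos hqpos)
      (fun x hx => fisherC_eq hp hq hppos hqpos hx)
  have hqne0 : ∀ x ∈ ubox d, q x ≠ 0 := fun x hx => (hqpos x (ubox_subset hx)).ne'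
  have part1 : (∫ x in Set.Icc (0 : Fin d → ℝ) 1, p x * hScore q x)
      - (∫ x in Set.Icc (0 : Fin d → ℝ) 1, p x * hScore p x)
      = (1/2) * ∫ x in Set.Icc (0 : Fin d → ℝ) 1,
          p x * ∑ i : Fin d, (x i)^2 * (1 - x i)^2
            * (pd i (fun y => Real.log (p y)) x - pd i (fun y => Real.log (q y)) x)^2 := by
    have e0 : (1/2 : ℝ) * ∫ x in Set.Icc (0 : Fin d → ℝ) 1,
          p x * ∑ i : Fin d, (x i)^2 * (1 - x i)^2
            * (pd i (fun y => Real.log (p y)) x - pd i (fun y => Real.log (q y)) x)^2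
        = ∫ x in Set.Icc (0 : Fin d → ℝ) 1, (1/2) * (p x * ∑ i : Fin d, (x i)^2 * (1 - x i)^2
            * (pd i (fun y => Real.log (p y)) x - pd i (fun y => Real.log (q y)) x)^2) :=
      (integral_const_mul _ _).symm
    have e1 : ∫ x in Set.Icc (0 : Fin d → ℝ) 1,
        (p x * hScore q x - p x * hScore p x - (1/2) * (p x * ∑ i : Fin d, (x i)^2 * (1 - x i)^2
          * (pd i (fun y => Real.log (p y)) x - pd i (fun y => Real.log (q y)) x)^2))
        = ∫ x in Set.Icc (0 : Fin d → ℝ) 1, (∑ i : Fin d, pd i (Psi p q i) x) :=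
      setIntegral_congr_ubox (fun x hx => (main_pointwise hp hq hppos hqpos hx).trans
        (Finset.sum_congr rfl fun j _ => (pd_Psi_eq hp hq (hqne0 x hx) hx).symm))
    have e2 : ∫ x in Set.Icc (0 : Fin d → ℝ) 1, (∑ i : Fin d, pd i (Psi p q i) x) = 0 := by
      rw [integral_finset_sum _ (fun j _ => integrableOn_pd_Psi hp hq hqpos j)]
      exact Finset.sum_eq_zero fun j _ => integral_pd_Psi_zero hp hq hqpos j
    have e3 : ∫ x in Set.Icc (0 : Fin d → ℝ) 1,
        (p x * hScore q x - p x * hScore p x - (1/2) * (p x * ∑ i : Fin d, (x i)^2 * (1 - x i)^2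
          * (pd i (fun y => Real.log (p y)) x - pd i (fun y => Real.log (q y)) x)^2))
        = (∫ x in Set.Icc (0 : Fin d → ℝ) 1, p x * hScore q x)
          - (∫ x in Set.Icc (0 : Fin d → ℝ) 1, p x * hScore p x)
          - ∫ x in Set.Icc (0 : Fin d → ℝ) 1, (1/2) * (p x * ∑ i : Fin d, (x i)^2 * (1 - x i)^2
            * (pd i (fun y => Real.log (p y)) x - pd i (fun y => Real.log (q y)) x)^2) := by
      have hsub : IntegrableOn (fun x => p x * hScore q x - p x * hScore p x)
          (Set.Icc (0 : Fin d → ℝ) 1) volume := hIq.sub hIp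
      rw [integral_sub hsub (hIF.const_mul (1/2)), integral_sub hIq hIp]
    rw [e1, e2] at e3
    rw [e0]
    linarith
  have h3nonneg : 0 ≤ ∫ x in Set.Icc (0 : Fin d → ℝ) 1,
      p x * ∑ i : Fin d, (x i)^2 * (1 - x i)^2
        * (pd i (fun y => Real.log (p y)) x - pd i (fun y => Real.log (q y)) x)^2 :=
    setIntegral_nonneg measurableSet_Icc fun x hx =>
      mul_nonneg (hppos x hx).le (Finset.sum_nonneg fun j _ => by positivity)
  refine ⟨part1, by linarith, ?_, ?_⟩
  · -- equality → q = p on the box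
    intro heq
    have hI3 : (∫ x in Set.Icc (0 : Fin d → ℝ) 1,
        p x * ∑ i : Fin d, (x i)^2 * (1 - x i)^2
          * (pd i (fun y => Real.log (p y)) x - pd i (fun y => Real.log (q y)) x)^2) = 0 := by
      linarith
    have hae : (fun x => p x * ∑ i : Fin d, (x i)^2 * (1 - x i)^2
        * (pd i (fun y => Real.log (p y)) x - pd i (fun y => Real.log (q y)) x)^2)
        =ᵐ[volume.restrict (Set.Icc (0 : Fin d → ℝ) 1)] 0 := by
      refine (setIntegral_eq_zero_iff_of_nonneg_ae ?_ hIF).1 hI3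
      filter_upwards [ae_restrict_mem measurableSet_Icc] with x hx
      exact mul_nonneg (hppos x hx).le (Finset.sum_nonneg fun j _ => by positivity)
    have haeU : ∀ᵐ x ∂(volume.restrict (ubox d)), fisherC p q x = 0 := by
      have h1 : ∀ᵐ x ∂(volume.restrict (ubox d)), (fun x => p x * ∑ i : Fin d, (x i)^2 * (1 - x i)^2
          * (pd i (fun y => Real.log (p y)) x - pd i (fun y => Real.log (q y)) x)^2) x = 0 := by
        rw [← restrict_box_eq_ubox]; exact hae
      filter_upwards [h1, ae_restrict_mem isOpen_ubox.measurableSet] with x h1x hxu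
      rw [fisherC_eq hp hq hppos hqpos hxu]
      exact h1x
    have hzero : ∀ x ∈ ubox d, fisherC p q x = 0 := by
      by_contra hcon
      push_neg at hcon
      obtain ⟨x₀, hx₀, hne0⟩ := hcon
      have hopen : IsOpen (ubox d ∩ fisherC p q ⁻¹' {(0:ℝ)}ᶜ) :=
        ((contOn_fisherC hp hq hppos hqpos).mono ubox_subset).isOpen_inter_preimage
          isOpen_ubox isOpen_compl_singleton
      have hposmeas : 0 < volume (ubox d ∩ fisherC p q ⁻¹' {(0:ℝ)}ᶜ) :=
        hopen.measure_pos volume ⟨x₀, hx₀, hne0⟩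
      have hnull : volume (ubox d ∩ fisherC p q ⁻¹' {(0:ℝ)}ᶜ) = 0 := by
        have h2 : volume.restrict (ubox d) {x | ¬ fisherC p q x = 0} = 0 := ae_iff.1 haeU
        rw [Measure.restrict_apply' isOpen_ubox.measurableSet] at h2
        rw [← h2]
        congr 1
        ext x
        simp [Set.mem_inter_iff, and_comm]
      exact absurd hnull hposmeas.ne'
    have hqne : ∀ x ∈ ubox d, q x ≠ 0 := fun x hx => (hqpos x (ubox_subset hx)).ne'
    have hpne : ∀ x ∈ ubox d, p x ≠ 0 := fun x hx => (hppos x (ubox_subset hx)).ne'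
    have hptz : ∀ x ∈ ubox d, ∀ j : Fin d,
        pd j (fun y => Real.log (q y)) x = pd j (fun y => Real.log (p y)) x := by
      intro x hx j
      have h0 := hzero x hx
      rw [fisherC] at h0
      have hsum0 : ∑ i : Fin d, (x i)^2 * (1 - x i)^2
          * (W1 i p x / p x - W1 i q x / q x)^2 = 0 := by
        rcases mul_eq_zero.1 h0 with h | h
        · exact absurd h (hpne x hx)
        · exact h
      have hterm := (Finset.sum_eq_zero_iff_of_nonneg
        (fun j _ => by positivity)).1 hsum0 j (Finset.mem_univ j)
      have hxj := mem_ubox.1 hx j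
      have hwpos : (0:ℝ) < (x j)^2 * (1 - x j)^2 :=
        mul_pos (pow_pos hxj.1 2) (pow_pos (by linarith [hxj.2]) 2)
      have hdz : W1 j p x / p x - W1 j q x / q x = 0 := by
        have := mul_eq_zero.1 hterm
        rcases this with h | h
        · exact absurd h hwpos.ne'
        · exact (pow_eq_zero_iff (two_ne_zero)).1 h
      rw [pd_log hq hx (hqne x hx), pd_log hp hx (hpne x hx)]
      rw [W1_eq_pd hx, W1_eq_pd hx, div_eq_inv_mul, div_eq_inv_mul] at hdz
      linarith
    -- the function log q - log p is constant on the open box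
    set G : (Fin d → ℝ) → ℝ := fun y => Real.log (q y) - Real.log (p y) with hG
    have hGdiff : DifferentiableOn ℝ G (ubox d) := fun x hx =>
      (((diffAt_ubox hq hx).log (hqne x hx)).sub
        ((diffAt_ubox hp hx).log (hpne x hx))).differentiableWithinAt
    have hGzero : ∀ x ∈ ubox d, fderivWithin ℝ G (ubox d) x = 0 := by
      intro x hx
      rw [fderivWithin_of_isOpen isOpen_ubox hx]
      have hdq : DifferentiableAt ℝ (fun y => Real.log (q y)) x :=
        (diffAt_ubox hq hx).log (hqne x hx)
      have hdp : DifferentiableAt ℝ (fun y => Real.log (p y)) x :=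
        (diffAt_ubox hp hx).log (hpne x hx)
      have hfd : fderiv ℝ G x = fderiv ℝ (fun y => Real.log (q y)) x
          - fderiv ℝ (fun y => Real.log (p y)) x := fderiv_sub hdq hdp
      have happ : ∀ j : Fin d, (fderiv ℝ (fun y => Real.log (q y)) x
          - fderiv ℝ (fun y => Real.log (p y)) x) (Pi.single j 1) = 0 := by
        intro j
        have h3 := hptz x hx j
        simp only [ContinuousLinearMap.sub_apply]
        exact sub_eq_zero_of_eq h3
      refine ContinuousLinearMap.ext fun v => ?_
      have hv : v = ∑ j : Fin d, v j • (Pi.single j 1 : Fin d → ℝ) := by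
        funext k
        simp [Pi.single_apply, mul_ite, Finset.sum_ite_eq, Finset.sum_ite_eq']
      rw [hfd]
      conv_lhs => rw [hv]
      rw [map_sum]
      simp only [_root_.map_smul, happ, smul_eq_mul, mul_zero]
      simp
    have hconvex : Convex ℝ (ubox d) := convex_pi fun i _ => convex_Ioo 0 1
    have hconst : ∀ x ∈ ubox d, G x = G (fun _ => (1:ℝ)/2) := fun x hx =>
      hconvex.is_const_of_fderivWithin_eq_zero hGdiff hGzero hx half_mem_ubox
    set c : ℝ := G (fun _ => (1:ℝ)/2) with hc
    have hqc : ∀ x ∈ ubox d, q x = Real.exp c * p x := by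
      intro x hx
      have h := hconst x hx
      have hlog : Real.log (q x) = c + Real.log (p x) := by
        simp only [hG] at h
        linarith
      calc q x = Real.exp (Real.log (q x)) := (Real.exp_log (hqpos _ (ubox_subset hx))).symm
        _ = Real.exp c * Real.exp (Real.log (p x)) := by rw [hlog, Real.exp_add]
        _ = Real.exp c * p x := by rw [Real.exp_log (hppos _ (ubox_subset hx))]
    have hclos : closure (ubox d) = Set.Icc (0 : Fin d → ℝ) 1 := by
      rw [ubox, closure_pi_set]
      have h1 : (fun i : Fin d => closure (Set.Ioo (0:ℝ) 1)) = fun _ : Fin d => Set.Icc (0:ℝ) 1 := by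
        funext i
        exact closure_Ioo (by norm_num)
      rw [h1]
      exact Set.pi_univ_Icc 0 1
    have hext : Set.EqOn q (fun x => Real.exp c * p x) (Set.Icc (0 : Fin d → ℝ) 1) := by
      intro x hx
      have hx' : x ∈ closure (ubox d) := hclos ▸ hx
      have hnb : (nhdsWithin x (ubox d)).NeBot := mem_closure_iff_nhdsWithin_neBot.1 hx'
      have h1 : Filter.Tendsto q (nhdsWithin x (ubox d)) (nhds (q x)) :=
        (hq.continuousOn x hx).mono ubox_subset
      have h2 : Filter.Tendsto (fun y => Real.exp c * p y) (nhdsWithin x (ubox d))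
          (nhds (Real.exp c * p x)) :=
        ((continuous_const.continuousOn.mul hp.continuousOn) x hx).mono ubox_subset
      have h3 : q =ᶠ[nhdsWithin x (ubox d)] fun y => Real.exp c * p y := by
        filter_upwards [self_mem_nhdsWithin] with y hy using hqc y hy
      exact tendsto_nhds_unique (h1.congr' h3) h2
    have hexp : Real.exp c = 1 := by
      have h1 : ∫ x in Set.Icc (0 : Fin d → ℝ) 1, q x
          = Real.exp c * ∫ x in Set.Icc (0 : Fin d → ℝ) 1, p x := by
        rw [setIntegral_congr_fun measurableSet_Icc hext, integral_const_mul]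
      rw [hqint, hpint, mul_one] at h1
      linarith
    intro x hx
    have h5 := hext hx
    simp only [hexp, one_mul] at h5
    exact h5
  · -- q = p on the box → equality
    intro heqon
    have hI3 : (∫ x in Set.Icc (0 : Fin d → ℝ) 1,
        p x * ∑ i : Fin d, (x i)^2 * (1 - x i)^2
          * (pd i (fun y => Real.log (p y)) x - pd i (fun y => Real.log (q y)) x)^2) = 0 := by
      have hz : ∀ x ∈ ubox d, (p x * ∑ i : Fin d, (x i)^2 * (1 - x i)^2
          * (pd i (fun y => Real.log (p y)) x - pd i (fun y => Real.log (q y)) x)^2)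
          = (0:ℝ) := by
        intro x hx
        have hsum : ∑ i : Fin d, (x i)^2 * (1 - x i)^2
            * (pd i (fun y => Real.log (p y)) x - pd i (fun y => Real.log (q y)) x)^2 = 0 := by
          refine Finset.sum_eq_zero fun j _ => ?_
          have hev : (fun y => Real.log (p y)) =ᶠ[nhds x] (fun y => Real.log (q y)) := by
            filter_upwards [box_mem_nhds hx] with y hy
            rw [heqon hy]
          rw [pd_congr hev]
          ring
        rw [hsum, mul_zero]
      rw [setIntegral_congr_ubox hz]
      simp
    linarith
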